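/- For every integer N ≥ 1 there exists a function G : ℂ → ℂ that is complex differentiable (holomorphic) at every point of the open strip {z ∈ ℂ : |Im z| < A_N/√2} and satisfies G(z) = F_N(z) at every z in this strip at which exp(2 A_N z e^{-iπ/4}) + 1 ≠ 0 and z² + i t_k² ≠ 0 for all k = 1,…,N (i.e., wherever the defining formula of F_N has nonvanishing denominators). -/

import Mathlib

noncomputable section

/-- `A_N = √((N + 1/2)π)`. -/
def A (N : ℕ) : ℝ := Real.sqrt (((N : ℝ) + 1 / 2) * Real.pi)

/-- `t_k = (k − 1/2)π/√((N + 1/2)π)`. -/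
def tk (N k : ℕ) : ℝ := (((k : ℝ) - 1 / 2) * Real.pi) / Real.sqrt (((N : ℝ) + 1 / 2) * Real.pi)

/-- The modified trapezium rule approximation `F_N(z)`. -/
def FN (N : ℕ) (z : ℂ) : ℂ :=
  1 / (Complex.exp (2 * (A N : ℂ) * z * Complex.exp (-(Real.pi / 4 : ℂ) * Complex.I)) + 1) +
    (z / (A N : ℂ)) * Complex.exp (Complex.I * (z ^ 2 + (Real.pi / 4 : ℂ))) *
      ∑ k ∈ Finset.Icc 1 N,
        (Real.exp (-(tk N k) ^ 2) : ℂ) / (z ^ 2 + Complex.I * ((tk N k : ℝ) : ℂ) ^ 2)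

open Complex Filter Metric Finset Function Topology

def w0 : ℂ := Complex.exp (-(Real.pi / 4 : ℂ) * Complex.I)
lemma w0_ne : w0 ≠ 0 := Complex.exp_ne_zero _
lemma w0_sq : w0 ^ 2 = -Complex.I := by
  rw [sq, w0, ← Complex.exp_add]
  have h : -(↑Real.pi / 4 : ℂ) * Complex.I + -(↑Real.pi / 4 : ℂ) * Complex.I
      = ((-(Real.pi/2) : ℝ) : ℂ) * Complex.I := by push_cast; ring
  rw [h, Complex.exp_mul_I, ← Complex.ofReal_cos, ← Complex.ofReal_sin]
  simp [Real.cos_pi_div_two, Real.sin_pi_div_two]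
lemma w0_abs : ‖w0‖ = 1 := by
  rw [w0, Complex.norm_exp]; simp
lemma w0_im : w0.im = -(Real.sqrt 2 / 2) := by
  have h : (-(Real.pi / 4 : ℂ)) * Complex.I = ((-(Real.pi/4) : ℝ) : ℂ) * Complex.I := by
    push_cast; ring
  rw [w0, h, Complex.exp_ofReal_mul_I_im, Real.sin_neg, Real.sin_pi_div_four]

variable {N : ℕ}

lemma A_pos : 0 < A N := Real.sqrt_pos.mpr (by positivity)

lemma A_sq : (A N) ^ 2 = ((N : ℝ) + 1 / 2) * Real.pi :=
  Real.sq_sqrt (by positivity)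

lemma tk_eq (k : ℕ) : tk N k = (2 * (k : ℝ) - 1) * (Real.pi / (2 * A N)) := by
  have hA : A N ≠ 0 := ne_of_gt A_pos
  rw [tk, show Real.sqrt (((N : ℝ) + 1 / 2) * Real.pi) = A N from rfl, div_eq_iff hA]
  field_simp

lemma tk_pos {k : ℕ} (hk : 1 ≤ k) : 0 < tk N k := by
  rw [tk_eq]
  have h1 : (1 : ℝ) ≤ (k : ℝ) := by exact_mod_cast hk
  have h2 := A_pos (N := N)
  have h3 := Real.pi_pos
  exact mul_pos (by linarith) (div_pos h3 (by linarith))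

-- every singular point lies on the lattice {(2m+1)·π/(2A)·w0}
lemma bad_form (hN : 1 ≤ N) (w : ℂ)
    (h : Complex.exp (2 * (A N : ℂ) * w * w0) + 1 = 0 ∨
      ∃ j ∈ Finset.Icc 1 N, w ^ 2 + Complex.I * ((tk N j : ℝ) : ℂ) ^ 2 = 0) :
    ∃ m : ℤ, w = (((2 * (m : ℝ) + 1) * (Real.pi / (2 * A N)) : ℝ) : ℂ) * w0 := by
  have hA : ((A N : ℝ) : ℂ) ≠ 0 := by
    exact_mod_cast ne_of_gt (A_pos (N := N))
  rcases h with h | ⟨j, hj, hPj⟩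
  · have hez : Complex.exp (2 * (A N : ℂ) * w * w0) = -1 := eq_neg_of_add_eq_zero_left h
    have hexp : Complex.exp (2 * (A N : ℂ) * w * w0 - Real.pi * Complex.I) = 1 := by
      rw [Complex.exp_sub, hez, Complex.exp_pi_mul_I]; norm_num
    obtain ⟨n, hn⟩ := Complex.exp_eq_one_iff.mp hexp
    refine ⟨-n - 1, ?_⟩
    have h2 : (2 * ((A N : ℝ) : ℂ) * w0) ≠ 0 :=
      mul_ne_zero (mul_ne_zero two_ne_zero hA) w0_ne
    have hcan : (↑Real.pi / (2 * ((A N : ℝ) : ℂ))) * (2 * ((A N : ℝ) : ℂ)) = ↑Real.pi :=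
      div_mul_cancel₀ _ (mul_ne_zero two_ne_zero hA)
    apply mul_left_cancel₀ h2
    push_cast
    linear_combination hn + (2 * (n : ℂ) + 1) * w0 ^ 2 * hcan
      + (2 * (n : ℂ) + 1) * (Real.pi : ℂ) * w0_sq
  · set τ : ℂ := ((tk N j : ℝ) : ℂ) with hτ
    have hfac : (w - τ * w0) * (w + τ * w0) = 0 := by
      linear_combination hPj - τ ^ 2 * w0_sq
    have htkco : ((tk N j : ℝ) : ℂ) = ((2 * (j : ℝ) - 1) * (Real.pi / (2 * A N)) : ℝ) := by
      exact congrArg (Complex.ofReal) (tk_eq j)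
    rcases mul_eq_zero.mp hfac with h1 | h1
    · refine ⟨(j : ℤ) - 1, ?_⟩
      have hw : w = τ * w0 := by linear_combination h1
      rw [hw, hτ, htkco]
      push_cast
      ring
    · refine ⟨-(j : ℤ), ?_⟩
      have hw : w = -(τ * w0) := by linear_combination h1
      rw [hw, hτ, htkco]
      push_cast
      ring

lemma rw0_im (r : ℝ) : (((r : ℝ) : ℂ) * w0).im = -(r * (Real.sqrt 2 / 2)) := by
  rw [Complex.mul_im, Complex.ofReal_re, Complex.ofReal_im, w0_im]; ring

lemma classify (hN : 1 ≤ N) {z : ℂ} (hz : |z.im| < A N / Real.sqrt 2)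
    (hbad : Complex.exp (2 * (A N : ℂ) * z * w0) + 1 = 0 ∨
      ∃ j ∈ Finset.Icc 1 N, z ^ 2 + Complex.I * ((tk N j : ℝ) : ℂ) ^ 2 = 0) :
    (∃ m : ℤ, z = (((2 * (m : ℝ) + 1) * (Real.pi / (2 * A N)) : ℝ) : ℂ) * w0) ∧
    ∃ k ∈ Finset.Icc 1 N,
      z = ((tk N k : ℝ) : ℂ) * w0 ∨ z = -(((tk N k : ℝ) : ℂ) * w0) := by
  obtain ⟨m, hm⟩ := bad_form hN z hbad
  refine ⟨⟨m, hm⟩, ?_⟩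
  have hA0 := A_pos (N := N)
  have hπ := Real.pi_pos
  have hs2 : (0:ℝ) < Real.sqrt 2 := by positivity
  set r : ℝ := (2 * (m : ℝ) + 1) * (Real.pi / (2 * A N)) with hr
  have him : z.im = -(r * (Real.sqrt 2 / 2)) := by rw [hm]; exact rw0_im r
  have h22 : Real.sqrt 2 * Real.sqrt 2 = 2 := Real.mul_self_sqrt (by norm_num)
  have habs : |r| < A N := by
    rw [him] at hz
    rw [abs_neg, abs_mul, abs_of_pos (by positivity : (0:ℝ) < Real.sqrt 2 / 2)] at hz
    have h4 := mul_lt_mul_of_pos_right hz hs2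
    rw [div_mul_cancel₀ _ (ne_of_gt hs2)] at h4
    have h5 : |r| * (Real.sqrt 2 / 2) * Real.sqrt 2 = |r| := by
      have h6 : Real.sqrt 2 / 2 * Real.sqrt 2 = 1 := by
        rw [div_mul_eq_mul_div, h22]; norm_num
      rw [mul_assoc, h6, mul_one]
    rw [h5] at h4
    exact h4
  have hmabs : |2 * (m : ℝ) + 1| < 2 * (N : ℝ) + 1 := by
    have hA2 := A_sq (N := N)
    have hAne : A N ≠ 0 := ne_of_gt hA0
    rw [hr, abs_mul, abs_of_pos (by positivity : (0:ℝ) < Real.pi / (2 * A N))] at habs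
    have h6 : |2*(m:ℝ)+1| * Real.pi < 2 * (A N)^2 := by
      have h7 := mul_lt_mul_of_pos_right habs (by positivity : (0:ℝ) < 2 * A N)
      calc |2*(m:ℝ)+1| * Real.pi = |2*(m:ℝ)+1| * (Real.pi/(2 * A N)) * (2 * A N) := by
            field_simp
        _ < A N * (2 * A N) := h7
        _ = 2 * (A N)^2 := by ring
    have h8 : |2*(m:ℝ)+1| * Real.pi < (2*(N:ℝ)+1) * Real.pi := by nlinarith [h6]
    exact lt_of_mul_lt_mul_right h8 hπ.le
  have hmabs' : |2 * m + 1| < 2 * (N : ℤ) + 1 := by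
    have : |(2 * (m:ℝ) + 1)| = ((|2 * m + 1| : ℤ) : ℝ) := by push_cast; norm_num
    rw [this] at hmabs
    exact_mod_cast hmabs
  have hb1 : 2 * m + 1 ≤ |2 * m + 1| := le_abs_self _
  have hb2 : -(2 * m + 1) ≤ |2 * m + 1| := neg_le_abs _
  rcases le_or_gt 0 m with hm0 | hm0
  · refine ⟨m.toNat + 1, ?_, Or.inl ?_⟩
    · simp only [Finset.mem_Icc]
      omega
    · have hcast : ((m.toNat : ℕ) : ℝ) = (m : ℝ) := by
        exact_mod_cast congrArg (Int.cast : ℤ → ℝ) (Int.toNat_of_nonneg hm0)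
      rw [hm]
      congr 2
      rw [tk_eq]
      push_cast [hcast]
      ring
  · refine ⟨(-m).toNat, ?_, Or.inr ?_⟩
    · simp only [Finset.mem_Icc]
      omega
    · have hcast : (((-m).toNat : ℕ) : ℝ) = -(m : ℝ) := by
        exact_mod_cast congrArg (Int.cast : ℤ → ℝ) (Int.toNat_of_nonneg (by omega : (0:ℤ) ≤ -m))
      rw [hm]
      rw [show -(((tk N ((-m).toNat) : ℝ) : ℂ) * w0) = ((-(tk N ((-m).toNat)) : ℝ) : ℂ) * w0
        from by push_cast; ring]
      congr 2
      rw [tk_eq]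
      push_cast [hcast]
      ring

lemma spacing {m m' : ℤ} (hne : m ≠ m') :
    Real.pi / A N ≤ dist ((((2 * (m : ℝ) + 1) * (Real.pi / (2 * A N)) : ℝ) : ℂ) * w0)
      ((((2 * (m' : ℝ) + 1) * (Real.pi / (2 * A N)) : ℝ) : ℂ) * w0) := by
  have hA0 := A_pos (N := N)
  have hπ := Real.pi_pos
  set r : ℝ := (2 * (m : ℝ) + 1) * (Real.pi / (2 * A N))
  set r' : ℝ := (2 * (m' : ℝ) + 1) * (Real.pi / (2 * A N))
  rw [Complex.dist_eq, show ((r : ℝ) : ℂ) * w0 - ((r' : ℝ) : ℂ) * w0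
    = (((r - r' : ℝ)) : ℂ) * w0 from by push_cast; ring, norm_mul, w0_abs, mul_one,
    Complex.norm_real, Real.norm_eq_abs]
  have hAne : A N ≠ 0 := ne_of_gt hA0
  have h2 : 2 * (Real.pi / (2 * A N)) = Real.pi / A N := by
    rw [eq_div_iff hAne]
    field_simp
  have hval : r - r' = ((m : ℝ) - (m' : ℝ)) * (Real.pi / A N) := by
    rw [← h2]
    ring
  rw [hval, abs_mul, abs_of_pos (by positivity : (0:ℝ) < Real.pi / A N)]
  have h1 : (1 : ℝ) ≤ |(m : ℝ) - (m' : ℝ)| := by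
    have : (1 : ℤ) ≤ |m - m'| := Int.one_le_abs (sub_ne_zero.mpr hne)
    calc (1:ℝ) ≤ ((|m - m'| : ℤ) : ℝ) := by exact_mod_cast this
      _ = |(m : ℝ) - (m' : ℝ)| := by push_cast; norm_num
  simpa using mul_le_mul_of_nonneg_right h1 (by positivity : (0:ℝ) ≤ Real.pi / A N)

lemma alg_key (Qz Pz Ez r z c a : ℂ) (hQz : Qz ≠ 0) (hPz : Pz ≠ 0) (hzc : z - c ≠ 0)
    (ha : a ≠ 0) :
    (Pz + Qz * (z / a * Ez * r)) / (z - c) ^ 2 * (Qz / (z - c))⁻¹ * (Pz / (z - c))⁻¹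
      = 1 / Qz + z / a * Ez * (r / Pz) := by
  have hs : (z - c) ^ 2 ≠ 0 := pow_ne_zero 2 hzc
  rw [inv_div, inv_div, div_mul_div_comm, div_mul_div_comm]
  rw [show (Pz + Qz * (z / a * Ez * r)) * (z - c) * (z - c)
      = ((z - c) ^ 2) * (Pz + Qz * (z / a * Ez * r)) from by ring]
  rw [show (z - c) ^ 2 * Qz * Pz = ((z - c) ^ 2) * (Qz * Pz) from by ring]
  rw [mul_div_mul_left _ _ hs]
  field_simp

set_option maxHeartbeats 1000000 in
lemma key_tendsto (a : ℂ) (ha : a ≠ 0) (t : ℝ) (c : ℂ) (hc0 : c ≠ 0)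
    (hP : c ^ 2 + Complex.I * (t : ℂ) ^ 2 = 0)
    (hQ : Complex.exp (2 * a * c * w0) = -1) :
    ∃ L, Filter.Tendsto (fun z : ℂ =>
      1 / (Complex.exp (2 * a * z * w0) + 1) +
        z / a * Complex.exp (Complex.I * (z ^ 2 + (Real.pi / 4 : ℂ))) *
          ((Real.exp (-t ^ 2) : ℂ) / (z ^ 2 + Complex.I * ((t : ℝ) : ℂ) ^ 2)))
      (𝓝[≠] c) (𝓝 L) := by
  set Q : ℂ → ℂ := fun z => Complex.exp (2 * a * z * w0) + 1 with hQdef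
  set P : ℂ → ℂ := fun z => z ^ 2 + Complex.I * (t : ℂ) ^ 2 with hPdef
  set E : ℂ → ℂ := fun z => Complex.exp (Complex.I * (z ^ 2 + (Real.pi / 4 : ℂ))) with hEdef
  set ρ : ℂ := ((Real.exp (-t ^ 2) : ℝ) : ℂ) with hρdef
  set H : ℂ → ℂ := fun z => z / a * E z * ρ with hHdef
  set Nm : ℂ → ℂ := fun z => P z + Q z * H z with hNmdef
  have hQc : Q c = 0 := by simp [hQdef, hQ]
  have hPc : P c = 0 := hP
  have hNmc : Nm c = 0 := by simp [hNmdef, hQc, hPc]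
  -- derivatives
  have hQd : ∀ z : ℂ, HasDerivAt Q (2 * a * w0 * Complex.exp (2 * a * z * w0)) z := by
    intro z
    have h1 : HasDerivAt (fun z : ℂ => 2 * a * z * w0) (2 * a * w0) z :=
      (((hasDerivAt_id z).const_mul (2 * a)).mul_const w0).congr_deriv (by simp)
    exact (h1.cexp.add_const 1).congr_deriv (by ring)
  have hPd : HasDerivAt P (2 * c) c := by
    simpa [hPdef] using ((hasDerivAt_pow 2 c).add_const (Complex.I * (t : ℂ) ^ 2))
  have hEd : HasDerivAt E (E c * (Complex.I * (2 * c))) c := by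
    have h1 : HasDerivAt (fun z : ℂ => Complex.I * (z ^ 2 + (Real.pi / 4 : ℂ)))
        (Complex.I * (2 * c)) c := by
      simpa using ((hasDerivAt_pow 2 c).add_const ((Real.pi / 4 : ℂ))).const_mul Complex.I
    simpa [hEdef, mul_comm] using h1.cexp
  have hHd : HasDerivAt H ((1 / a * E c + c / a * (E c * (Complex.I * (2 * c)))) * ρ) c := by
    have h1 : HasDerivAt (fun z : ℂ => z / a) (1 / a) c := by
      simpa using (hasDerivAt_id c).div_const a
    exact ((h1.mul hEd).mul_const ρ).congr_deriv (by ring)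
  have hNd : HasDerivAt Nm (2 * c + ((2 * a * w0 * Complex.exp (2 * a * c * w0)) * H c
      + Q c * ((1 / a * E c + c / a * (E c * (Complex.I * (2 * c)))) * ρ))) c :=
    hPd.add ((hQd c).mul hHd)
  have hone : w0 * (E c * ρ) = 1 := by
    rw [hEdef, hρdef, Complex.ofReal_exp, w0, ← Complex.exp_add, ← Complex.exp_add]
    rw [show -(↑Real.pi / 4 : ℂ) * Complex.I + (Complex.I * (c ^ 2 + (↑Real.pi / 4 : ℂ))
        + ((-t ^ 2 : ℝ) : ℂ)) = Complex.I * c ^ 2 - (t:ℂ)^2 by push_cast; ring]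
    rw [show Complex.I * c ^ 2 - (t:ℂ)^2 = 0 by linear_combination Complex.I * hP - (t:ℂ)^2 * Complex.I_sq]
    exact Complex.exp_zero
  have hNm' : deriv Nm c = 0 := by
    rw [hNd.deriv, hQc, hQ]
    have : (2 : ℂ) * a * w0 * -1 * H c = -(2*c) * (w0 * (E c * ρ)) * (a / a) := by
      rw [hHdef]; ring
    rw [this, hone, div_self ha]; ring
  -- eventual facts
  have hself : ∀ᶠ z in 𝓝[≠] c, z ≠ c := eventually_mem_nhdsWithin
  have hnegc : ∀ᶠ z in 𝓝[≠] c, z ≠ -c := by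
    have h : c ≠ -c := by
      intro h; apply hc0; linear_combination (1/2 : ℂ) * h
    exact (eventually_ne_nhds h).filter_mono nhdsWithin_le_nhds
  have hQne : ∀ᶠ z in 𝓝[≠] c, Q z ≠ 0 := by
    have ha' : 0 < ‖a‖ := by simpa using ha
    have hw' : 0 < ‖w0‖ := by simpa using w0_ne
    have hr : 0 < Real.pi / (‖a‖ * ‖w0‖) := by positivity
    have hball : ∀ᶠ z in 𝓝[≠] c, z ∈ ball c (Real.pi / (‖a‖ * ‖w0‖)) :=
      (eventually_of_mem (Metric.ball_mem_nhds c hr) fun z hz => hz).filter_mono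
        nhdsWithin_le_nhds
    filter_upwards [hball, hself] with z hz hzc h0
    have hez : Complex.exp (2 * a * z * w0) = -1 := by
      have := eq_neg_of_add_eq_zero_left h0
      simpa using this
    have hexp : Complex.exp (2 * a * z * w0 - 2 * a * c * w0) = 1 := by
      rw [Complex.exp_sub, hez, hQ]; norm_num
    obtain ⟨n, hn⟩ := Complex.exp_eq_one_iff.mp hexp
    have hfac : 2 * a * w0 * (z - c) = n * (2 * Real.pi * Complex.I) := by
      linear_combination hn
    rcases eq_or_ne n 0 with h | h
    · apply hzc
      rw [h] at hfac
      have h2 : (2 : ℂ) * a * w0 * (z - c) = 0 := by rw [hfac]; simp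
      rcases mul_eq_zero.mp h2 with h3 | h3
      · exact absurd h3 (mul_ne_zero (mul_ne_zero two_ne_zero ha) w0_ne)
      · exact sub_eq_zero.mp h3
    · have habs : ‖2 * a * w0 * (z - c)‖ = |(n : ℝ)| * (2 * Real.pi) := by
        rw [hfac]
        simp [Complex.norm_intCast, abs_of_pos Real.pi_pos, mul_assoc]
      have hlt : ‖2 * a * w0 * (z - c)‖ < 2 * Real.pi := by
        have hd : dist z c < Real.pi / (‖a‖ * ‖w0‖) := hz
        rw [Complex.dist_eq] at hd
        calc ‖2 * a * w0 * (z - c)‖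
            = 2 * (‖a‖ * ‖w0‖) * ‖z - c‖ := by
              simp only [norm_mul, Complex.norm_two]; ring
          _ < 2 * (‖a‖ * ‖w0‖)
              * (Real.pi / (‖a‖ * ‖w0‖)) := by
              apply mul_lt_mul_of_pos_left hd; positivity
          _ = 2 * Real.pi := by field_simp
      have h1 : (1 : ℝ) ≤ |(n : ℝ)| := by
        rw [← Int.cast_abs]
        exact_mod_cast Int.one_le_abs h
      rw [habs] at hlt
      nlinarith [Real.pi_pos]
  -- differentiability of Nm
  have hNmdiff : Differentiable ℂ Nm := by
    rw [hNmdef, hQdef, hPdef, hHdef, hEdef]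
    fun_prop
  have hdd : ContinuousAt (dslope (dslope Nm c) c) c := by
    rw [continuousAt_dslope_same]
    have h1 : DifferentiableOn ℂ (dslope Nm c) Set.univ :=
      (Complex.differentiableOn_dslope univ_mem).mpr hNmdiff.differentiableOn
    exact (h1 c (Set.mem_univ c)).differentiableAt univ_mem
  have hQder0 : deriv Q c ≠ 0 := by
    rw [(hQd c).deriv]
    exact mul_ne_zero (mul_ne_zero (mul_ne_zero two_ne_zero ha) w0_ne) (Complex.exp_ne_zero _)
  have hPder0 : deriv P c ≠ 0 := by
    rw [hPd.deriv]
    exact mul_ne_zero two_ne_zero hc0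
  have hdsQ : Tendsto (fun z => (dslope Q c z)⁻¹) (𝓝[≠] c) (𝓝 (deriv Q c)⁻¹) := by
    have h := (continuousAt_dslope_same.mpr (hQd c).differentiableAt).tendsto
    rw [dslope_same] at h
    exact (h.mono_left nhdsWithin_le_nhds).inv₀ hQder0
  have hdsP : Tendsto (fun z => (dslope P c z)⁻¹) (𝓝[≠] c) (𝓝 (deriv P c)⁻¹) := by
    have h := (continuousAt_dslope_same.mpr hPd.differentiableAt).tendsto
    rw [dslope_same] at h
    exact (h.mono_left nhdsWithin_le_nhds).inv₀ hPder0
  refine ⟨dslope (dslope Nm c) c c * (deriv Q c)⁻¹ * (deriv P c)⁻¹, ?_⟩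
  have hddt : Tendsto (dslope (dslope Nm c) c) (𝓝[≠] c) (𝓝 (dslope (dslope Nm c) c c)) :=
    hdd.tendsto.mono_left nhdsWithin_le_nhds
  have hB := (hddt.mul hdsQ).mul hdsP
  apply hB.congr'
  filter_upwards [hself, hnegc, hQne] with z hzc hznc hQz
  have hzsub : z - c ≠ 0 := sub_ne_zero.mpr hzc
  have hPz : P z ≠ 0 := by
    have hfac : P z = (z - c) * (z + c) := by
      simp only [hPdef]; linear_combination hP
    rw [hfac]
    refine mul_ne_zero hzsub fun h => hznc ?_
    linear_combination h
  have hdQ : dslope Q c z = Q z / (z - c) := by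
    rw [dslope_of_ne _ hzc, slope_def_field, hQc, sub_zero]
  have hdP : dslope P c z = P z / (z - c) := by
    rw [dslope_of_ne _ hzc, slope_def_field, hPc, sub_zero]
  have hdN1 : dslope Nm c z = Nm z / (z - c) := by
    rw [dslope_of_ne _ hzc, slope_def_field, hNmc, sub_zero]
  have hdN : dslope (dslope Nm c) c z = Nm z / (z - c) ^ 2 := by
    rw [dslope_of_ne _ hzc, slope_def_field, dslope_same, hNm', hdN1, sub_zero, sq, div_div]
  show dslope (dslope Nm c) c z * (dslope Q c z)⁻¹ * (dslope P c z)⁻¹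
      = 1 / Q z + z / a * E z * (ρ / P z)
  rw [hdN, hdQ, hdP]
  have hNz : Nm z = P z + Q z * (z / a * E z * ρ) := rfl
  rw [hNz]
  exact alg_key (Q z) (P z) (E z) ρ z c a hQz hPz hzsub ha


lemma FN_eq (N : ℕ) : FN N = fun z =>
    1 / (Complex.exp (2 * (A N : ℂ) * z * w0) + 1) +
    (z / (A N : ℂ)) * Complex.exp (Complex.I * (z ^ 2 + (Real.pi / 4 : ℂ))) *
      ∑ k ∈ Finset.Icc 1 N,
        (Real.exp (-(tk N k) ^ 2) : ℂ) / (z ^ 2 + Complex.I * ((tk N k : ℝ) : ℂ) ^ 2) := rfl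

lemma FN_diffAt (N : ℕ) {z : ℂ}
    (h1 : Complex.exp (2 * (A N : ℂ) * z * w0) + 1 ≠ 0)
    (h2 : ∀ k ∈ Finset.Icc 1 N, z ^ 2 + Complex.I * ((tk N k : ℝ) : ℂ) ^ 2 ≠ 0) :
    DifferentiableAt ℂ (FN N) z := by
  rw [FN_eq]
  apply DifferentiableAt.add
  · exact (differentiableAt_const 1).div (by fun_prop) h1
  · apply DifferentiableAt.mul
    · apply DifferentiableAt.mul
      · fun_prop
      · fun_prop
    · exact DifferentiableAt.fun_sum fun k hk =>
        (differentiableAt_const _).div (by fun_prop) (h2 k hk)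

theorem stmt_10 (N : ℕ) (hN : 1 ≤ N) :
    ∃ G : ℂ → ℂ,
      (∀ z : ℂ, |z.im| < A N / Real.sqrt 2 → DifferentiableAt ℂ G z) ∧
      (∀ z : ℂ, |z.im| < A N / Real.sqrt 2 →
        Complex.exp (2 * (A N : ℂ) * z * Complex.exp (-(Real.pi / 4 : ℂ) * Complex.I)) + 1 ≠ 0 →
        (∀ k ∈ Finset.Icc 1 N, z ^ 2 + Complex.I * ((tk N k : ℝ) : ℂ) ^ 2 ≠ 0) →
        G z = FN N z) := by
  classical
  have hA0 := A_pos (N := N)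
  have hAne : ((A N : ℝ) : ℂ) ≠ 0 := by exact_mod_cast ne_of_gt hA0
  set G : ℂ → ℂ := fun z => limUnder (𝓝[≠] z) (FN N) with hG
  have hgoodG : ∀ w : ℂ, Complex.exp (2 * (A N : ℂ) * w * w0) + 1 ≠ 0 →
      (∀ k ∈ Finset.Icc 1 N, w ^ 2 + Complex.I * ((tk N k : ℝ) : ℂ) ^ 2 ≠ 0) →
      G w = FN N w := fun w hw1 hw2 =>
    Filter.Tendsto.limUnder_eq
      (((FN_diffAt N hw1 hw2).continuousAt.continuousWithinAt :
        ContinuousWithinAt (FN N) {w}ᶜ w))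
  refine ⟨G, ?_, fun z _ h1 h2 => hgoodG z h1 h2⟩
  intro z hz
  by_cases hg : Complex.exp (2 * (A N : ℂ) * z * w0) + 1 ≠ 0 ∧
      ∀ k ∈ Finset.Icc 1 N, z ^ 2 + Complex.I * ((tk N k : ℝ) : ℂ) ^ 2 ≠ 0
  · -- good point: G agrees with FN on an open neighborhood
    have hcont1 : Continuous fun w : ℂ => Complex.exp (2 * (A N : ℂ) * w * w0) + 1 := by
      fun_prop
    have ho1 : IsOpen {w : ℂ | Complex.exp (2 * (A N : ℂ) * w * w0) + 1 ≠ 0} :=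
      isOpen_ne.preimage hcont1
    have ho2 : IsOpen {w : ℂ | ∀ k ∈ Finset.Icc 1 N,
        w ^ 2 + Complex.I * ((tk N k : ℝ) : ℂ) ^ 2 ≠ 0} := by
      have hset : {w : ℂ | ∀ k ∈ Finset.Icc 1 N,
          w ^ 2 + Complex.I * ((tk N k : ℝ) : ℂ) ^ 2 ≠ 0}
          = ⋂ k ∈ Finset.Icc 1 N, {w : ℂ | w ^ 2 + Complex.I * ((tk N k : ℝ) : ℂ) ^ 2 ≠ 0} := by
        ext w; simp
      rw [hset]
      exact isOpen_biInter_finset fun k _ => isOpen_ne.preimage (by fun_prop)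
    have hmem : ({w : ℂ | Complex.exp (2 * (A N : ℂ) * w * w0) + 1 ≠ 0} ∩
        {w : ℂ | ∀ k ∈ Finset.Icc 1 N, w ^ 2 + Complex.I * ((tk N k : ℝ) : ℂ) ^ 2 ≠ 0})
        ∈ 𝓝 z := (ho1.inter ho2).mem_nhds ⟨hg.1, hg.2⟩
    have hev : G =ᶠ[𝓝 z] FN N :=
      Filter.eventually_of_mem hmem fun w hw => hgoodG w hw.1 hw.2
    exact (FN_diffAt N hg.1 hg.2).congr_of_eventuallyEq hev
  · -- singular point
    have hbad : Complex.exp (2 * (A N : ℂ) * z * w0) + 1 = 0 ∨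
        ∃ j ∈ Finset.Icc 1 N, z ^ 2 + Complex.I * ((tk N j : ℝ) : ℂ) ^ 2 = 0 := by
      by_cases hx : Complex.exp (2 * (A N : ℂ) * z * w0) + 1 = 0
      · exact Or.inl hx
      · push_neg at hg
        exact Or.inr (hg hx)
    obtain ⟨⟨m, hmz⟩, k, hk, hcase⟩ := classify hN hz hbad
    obtain ⟨hk1, hkN⟩ := Finset.mem_Icc.mp hk
    set t := tk N k with htdef
    have ht0 : 0 < t := tk_pos hk1
    have htne : ((t : ℝ) : ℂ) ≠ 0 := by exact_mod_cast ne_of_gt ht0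
    have hz0 : z ≠ 0 := by
      rcases hcase with h | h <;> rw [h]
      · exact mul_ne_zero htne w0_ne
      · exact neg_ne_zero.mpr (mul_ne_zero htne w0_ne)
    have hP : z ^ 2 + Complex.I * ((t : ℝ) : ℂ) ^ 2 = 0 := by
      rcases hcase with h | h <;> rw [h] <;>
        linear_combination ((t : ℝ) : ℂ) ^ 2 * w0_sq
    have hAt : 2 * (A N * t) = (2 * (k : ℝ) - 1) * Real.pi := by
      rw [htdef, tk_eq]
      field_simp
    have hAt' : 2 * ((A N : ℝ) : ℂ) * ((t : ℝ) : ℂ) = (2 * (k : ℂ) - 1) * (Real.pi : ℂ) := by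
      have h := congrArg (Complex.ofReal) hAt
      push_cast at h ⊢
      linear_combination h
    have hQ : Complex.exp (2 * (A N : ℂ) * z * w0) = -1 := by
      rcases hcase with h | h
      · have harg : 2 * (A N : ℂ) * z * w0 = ((1 - 2 * (k : ℤ) : ℤ) : ℂ)
            * ((Real.pi : ℂ) * Complex.I) := by
          rw [h]; push_cast
          linear_combination 2 * ((A N : ℝ) : ℂ) * ((t : ℝ) : ℂ) * w0_sq - Complex.I * hAt'
        rw [harg, Complex.exp_int_mul, Complex.exp_pi_mul_I]
        exact Odd.neg_one_zpow ⟨-(k : ℤ), by ring⟩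
      · have harg : 2 * (A N : ℂ) * z * w0 = ((2 * (k : ℤ) - 1 : ℤ) : ℂ)
            * ((Real.pi : ℂ) * Complex.I) := by
          rw [h]; push_cast
          linear_combination (-2) * ((A N : ℝ) : ℂ) * ((t : ℝ) : ℂ) * w0_sq
            + Complex.I * hAt'
        rw [harg, Complex.exp_int_mul, Complex.exp_pi_mul_I]
        exact Odd.neg_one_zpow ⟨(k : ℤ) - 1, by ring⟩
    obtain ⟨L1, hL1⟩ := key_tendsto ((A N : ℝ) : ℂ) hAne t z hz0 hP hQ
    set Rst : ℂ → ℂ := fun w => w / ((A N : ℝ) : ℂ)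
        * Complex.exp (Complex.I * (w ^ 2 + (Real.pi / 4 : ℂ)))
        * ∑ j ∈ (Finset.Icc 1 N).erase k,
            (Real.exp (-(tk N j) ^ 2) : ℂ) / (w ^ 2 + Complex.I * ((tk N j : ℝ) : ℂ) ^ 2)
      with hRst
    have hRdiff : DifferentiableAt ℂ Rst z := by
      apply DifferentiableAt.mul
      · apply DifferentiableAt.mul
        · fun_prop
        · fun_prop
      · refine DifferentiableAt.fun_sum fun j hj => ?_
        have hjk : j ≠ k := Finset.ne_of_mem_erase hj
        have hjI : j ∈ Finset.Icc 1 N := Finset.mem_of_mem_erase hj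
        have hj1 : 1 ≤ j := (Finset.mem_Icc.mp hjI).1
        have hPj : z ^ 2 + Complex.I * ((tk N j : ℝ) : ℂ) ^ 2 ≠ 0 := by
          intro h0
          have hsq : ((tk N j : ℝ) : ℂ) ^ 2 = ((t : ℝ) : ℂ) ^ 2 := by
            have hdiff : Complex.I * (((tk N j : ℝ) : ℂ) ^ 2 - ((t : ℝ) : ℂ) ^ 2) = 0 := by
              linear_combination h0 - hP
            rcases mul_eq_zero.mp hdiff with h' | h'
            · exact absurd h' Complex.I_ne_zero
            · exact sub_eq_zero.mp h'
          have hsqr : (tk N j) ^ 2 = t ^ 2 := by exact_mod_cast hsq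
          have hfac : (tk N j - t) * (tk N j + t) = 0 := by linear_combination hsqr
          have htj0 := tk_pos (N := N) hj1
          rcases mul_eq_zero.mp hfac with h' | h'
          · have htj : tk N j = t := by linarith
            apply hjk
            rw [htdef, tk_eq, tk_eq] at htj
            have hpos : (0:ℝ) < Real.pi / (2 * A N) := by positivity
            have : 2 * (j : ℝ) - 1 = 2 * (k : ℝ) - 1 :=
              mul_right_cancel₀ (ne_of_gt hpos) htj
            exact_mod_cast (by linarith : (j : ℝ) = (k : ℝ))
          · linarith
        exact (differentiableAt_const _).div (by fun_prop) hPj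
    have hsplit : ∀ w : ℂ, FN N w =
        (1 / (Complex.exp (2 * ((A N : ℝ) : ℂ) * w * w0) + 1) +
          w / ((A N : ℝ) : ℂ) * Complex.exp (Complex.I * (w ^ 2 + (Real.pi / 4 : ℂ))) *
            ((Real.exp (-t ^ 2) : ℂ) / (w ^ 2 + Complex.I * ((t : ℝ) : ℂ) ^ 2))) + Rst w := by
      intro w
      simp only [FN_eq, hRst]
      rw [← Finset.add_sum_erase _ _ hk]
      ring
    have hT : Filter.Tendsto (FN N) (𝓝[≠] z) (𝓝 (L1 + Rst z)) := by
      have h2 : Filter.Tendsto Rst (𝓝[≠] z) (𝓝 (Rst z)) :=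
        hRdiff.continuousAt.continuousWithinAt
      exact (hL1.add h2).congr fun w => (hsplit w).symm
    have hrpos : 0 < Real.pi / A N := div_pos Real.pi_pos hA0
    have hiso : ∀ w ∈ ball z (Real.pi / A N), w ≠ z →
        Complex.exp (2 * (A N : ℂ) * w * w0) + 1 ≠ 0 ∧
        ∀ j ∈ Finset.Icc 1 N, w ^ 2 + Complex.I * ((tk N j : ℝ) : ℂ) ^ 2 ≠ 0 := by
      intro w hw hwz
      by_contra hcon
      have hbadw : Complex.exp (2 * (A N : ℂ) * w * w0) + 1 = 0 ∨
          ∃ j ∈ Finset.Icc 1 N, w ^ 2 + Complex.I * ((tk N j : ℝ) : ℂ) ^ 2 = 0 := by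
        by_cases hx : Complex.exp (2 * (A N : ℂ) * w * w0) + 1 = 0
        · exact Or.inl hx
        · push_neg at hcon
          exact Or.inr (hcon hx)
      obtain ⟨m', hm'⟩ := bad_form hN w hbadw
      have hmm : m' ≠ m := by
        intro h
        apply hwz
        rw [hm', h, ← hmz]
      have hsp := spacing (N := N) hmm
      rw [← hm', ← hmz] at hsp
      have hlt : dist w z < Real.pi / A N := mem_ball.mp hw
      linarith
    set Ft : ℂ → ℂ := Function.update (FN N) z (L1 + Rst z) with hFt
    have hFtz : ContinuousAt Ft z := continuousAt_update_same.mpr hT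
    have hballp : ∀ᶠ w in 𝓝[≠] z, w ∈ ball z (Real.pi / A N) :=
      (Filter.eventually_of_mem (ball_mem_nhds z hrpos) fun w hw => hw).filter_mono
        nhdsWithin_le_nhds
    have hFtd : ∀ᶠ w in 𝓝[≠] z, DifferentiableAt ℂ Ft w := by
      filter_upwards [hballp, eventually_mem_nhdsWithin] with w hw hwz
      have hgw := hiso w hw hwz
      have hFNd := FN_diffAt N hgw.1 hgw.2
      apply hFNd.congr_of_eventuallyEq
      filter_upwards [eventually_ne_nhds hwz] with u hu
      exact Function.update_of_ne hu _ _
    have hFta : AnalyticAt ℂ Ft z :=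
      Complex.analyticAt_of_differentiable_on_punctured_nhds_of_continuousAt hFtd hFtz
    have hGFt : G =ᶠ[𝓝 z] Ft := by
      filter_upwards [ball_mem_nhds z hrpos] with w hw
      rcases eq_or_ne w z with rfl | hwz
      · rw [hFt, Function.update_self]
        exact hT.limUnder_eq
      · have hgw := hiso w hw hwz
        rw [hFt, Function.update_of_ne hwz]
        exact hgoodG w hgw.1 hgw.2
    exact hFta.differentiableAt.congr_of_eventuallyEq hGFt

end
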